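/- For every positive integer m, the m×m matrix M₂ = 2(m² + 3m + 2)·𝟙_m𝟙_mᵀ − 2(m + 2)·(η_m𝟙_mᵀ + 𝟙_mη_mᵀ) + 2·η_mη_mᵀ + 2·H_m is symmetric positive definite. Moreover, M₂ = 2·R·H_{m+2}·Rᵀ, where R is the m×(m+2) matrix with R_{h,h} = −1, R_{h,m+1} = m + 2 − h, R_{h,m+2} = −(m + 1 − h), and all other entries zero. -/

import Mathlib

open Matrix

set_option maxRecDepth 4000

/-- The matrix
`M₂ = 2(m²+3m+2)𝟙𝟙ᵀ − 2(m+2)(η𝟙ᵀ+𝟙ηᵀ) + 2ηηᵀ + 2H_m` is symmetric positive definite,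
and `M₂ = 2·R·H_{m+2}·Rᵀ` for the matrix `R` with `R_{h,h} = −1`, `R_{h,m+1} = m+2−h`,
`R_{h,m+2} = −(m+1−h)` (1-based indices). -/
theorem stmt_16
    (m : ℕ) (hm : 0 < m)
    (M2 : Matrix (Fin m) (Fin m) ℝ)
    (hM2 : ∀ i j : Fin m, M2 i j =
      2 * ((m : ℝ) ^ 2 + 3 * (m : ℝ) + 2)
      - 2 * ((m : ℝ) + 2) * (((i.val : ℝ) + 1) + ((j.val : ℝ) + 1))
      + 2 * (((i.val : ℝ) + 1) * ((j.val : ℝ) + 1))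
      + 2 * ((min (i.val + 1) (j.val + 1) : ℕ) : ℝ))
    (R : Matrix (Fin m) (Fin (m + 2)) ℝ)
    (hR : ∀ (h : Fin m) (j : Fin (m + 2)), R h j =
      if (j : ℕ) = (h : ℕ) then -1
      else if (j : ℕ) = m then (m : ℝ) + 1 - (h : ℕ)
      else if (j : ℕ) = m + 1 then -((m : ℝ) - (h : ℕ))
      else 0)
    (H : Matrix (Fin (m + 2)) (Fin (m + 2)) ℝ)
    (hH : ∀ i j : Fin (m + 2), H i j = ((min (i.val + 1) (j.val + 1) : ℕ) : ℝ)) :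
    M2.PosDef ∧ M2 = (2 : ℝ) • (R * H * Rᵀ) := by
  have pB : m < m + 2 := by omega
  have pC : m + 1 < m + 2 := by omega
  -- key summation lemma: sums against a row of R have three-point support
  have key : ∀ (hh : Fin m) (f : Fin (m + 2) → ℝ),
      (∑ j, R hh j * f j) =
        -(f ⟨hh, by omega⟩) + ((m : ℝ) + 1 - (hh : ℕ)) * f ⟨m, pB⟩
          - ((m : ℝ) - (hh : ℕ)) * f ⟨m + 1, pC⟩ := by
    intro hh f
    have hlt := hh.isLt
    have pA : (hh : ℕ) < m + 2 := by omega
    have hsplit : ∀ j : Fin (m + 2), R hh j * f j =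
        (if j = (⟨hh, pA⟩ : Fin (m + 2)) then -(f ⟨hh, pA⟩) else 0)
        + (if j = (⟨m, pB⟩ : Fin (m + 2)) then ((m : ℝ) + 1 - (hh : ℕ)) * f ⟨m, pB⟩ else 0)
        + (if j = (⟨m + 1, pC⟩ : Fin (m + 2)) then
            -(((m : ℝ) - (hh : ℕ)) * f ⟨m + 1, pC⟩) else 0) := by
      intro j
      rw [hR]
      by_cases h1 : (j : ℕ) = (hh : ℕ)
      · have hj : j = (⟨hh, pA⟩ : Fin (m + 2)) := Fin.ext h1
        subst hj
        rw [if_pos h1, if_pos rfl, if_neg (by simp [Fin.ext_iff]; omega),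
          if_neg (by simp [Fin.ext_iff]; omega)]
        ring
      · rw [if_neg h1]
        by_cases h2 : (j : ℕ) = m
        · have hj : j = (⟨m, pB⟩ : Fin (m + 2)) := Fin.ext h2
          subst hj
          rw [if_pos h2, if_neg (by simp [Fin.ext_iff]; omega), if_pos rfl,
            if_neg (by simp [Fin.ext_iff])]
          ring
        · rw [if_neg h2]
          by_cases h3 : (j : ℕ) = m + 1
          · have hj : j = (⟨m + 1, pC⟩ : Fin (m + 2)) := Fin.ext h3
            subst hj
            rw [if_pos h3, if_neg (by simp [Fin.ext_iff]; omega),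
              if_neg (by simp [Fin.ext_iff]), if_pos rfl]
            ring
          · rw [if_neg h3, if_neg (by simp [Fin.ext_iff]; omega),
              if_neg (by simp [Fin.ext_iff]; omega), if_neg (by simp [Fin.ext_iff]; omega)]
            ring
    rw [Finset.sum_congr rfl fun j _ => hsplit j]
    rw [Finset.sum_add_distrib, Finset.sum_add_distrib]
    simp [Finset.sum_ite_eq']
    ring
  -- entry formula for R * H * Rᵀ
  have hmul : ∀ (hh kk : Fin m), (R * H * Rᵀ) hh kk =
      ((min (hh.val + 1) (kk.val + 1) : ℕ) : ℝ) + (m : ℝ) ^ 2 + (m : ℝ) - 1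
        - ((m : ℝ) + 1) * ((hh : ℕ) + (kk : ℕ)) + ((hh : ℕ) : ℝ) * ((kk : ℕ) : ℝ) := by
    intro hh kk
    have hlt1 := hh.isLt
    have hlt2 := kk.isLt
    have step1 : (R * H * Rᵀ) hh kk = ∑ j, R kk j * ((R * H) hh j) := by
      rw [Matrix.mul_apply]
      exact Finset.sum_congr rfl fun j _ => by rw [Matrix.transpose_apply, mul_comm]
    rw [step1, key kk]
    have step2 : ∀ p : Fin (m + 2), (R * H) hh p = ∑ i, R hh i * H i p := fun p =>
      Matrix.mul_apply
    rw [step2, step2, step2, key hh, key hh, key hh]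
    simp only [hH]
    rw [show (m + 1) ⊓ ((kk:ℕ) + 1) = (kk:ℕ) + 1 from by omega,
      show (m + 1 + 1) ⊓ ((kk:ℕ) + 1) = (kk:ℕ) + 1 from by omega,
      show ((hh:ℕ) + 1) ⊓ (m + 1) = (hh:ℕ) + 1 from by omega,
      show (m + 1) ⊓ (m + 1) = m + 1 from by omega,
      show (m + 1 + 1) ⊓ (m + 1) = m + 1 from by omega,
      show ((hh:ℕ) + 1) ⊓ (m + 1 + 1) = (hh:ℕ) + 1 from by omega,
      show (m + 1) ⊓ (m + 1 + 1) = m + 1 from by omega,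
      show (m + 1 + 1) ⊓ (m + 1 + 1) = m + 1 + 1 from by omega]
    push_cast
    ring
  -- the factorization
  have heq : M2 = (2 : ℝ) • (R * H * Rᵀ) := by
    ext hh kk
    rw [hM2, Matrix.smul_apply, hmul, smul_eq_mul]
    push_cast
    ring
  refine ⟨?_, heq⟩
  -- positive definiteness
  rw [Matrix.posDef_iff_dotProduct_mulVec]
  constructor
  · -- Hermitian
    ext i j
    rw [Matrix.conjTranspose_apply, star_trivial, hM2, hM2, Nat.min_comm]
    ring
  · intro x hx
    rw [star_trivial, heq, Matrix.smul_mulVec, dotProduct_smul, smul_eq_mul]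
    set y : Fin (m + 2) → ℝ := Rᵀ *ᵥ x with hy
    have hdot : x ⬝ᵥ (R * H * Rᵀ) *ᵥ x = y ⬝ᵥ H *ᵥ y := by
      rw [← Matrix.mulVec_mulVec, ← Matrix.mulVec_mulVec, Matrix.dotProduct_mulVec,
        ← Matrix.mulVec_transpose, Matrix.dotProduct_mulVec, ← Matrix.mulVec_transpose]
    rw [hdot]
    -- H = L * Lᵀ
    set L : Matrix (Fin (m + 2)) (Fin (m + 2)) ℝ :=
      fun i j => if (j : ℕ) ≤ (i : ℕ) then 1 else 0 with hL
    have hHL : H = L * Lᵀ := by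
      ext i j
      rw [hH, Matrix.mul_apply]
      have hterm : ∀ t : Fin (m + 2), L i t * Lᵀ t j =
          if (t : ℕ) ≤ min (i : ℕ) (j : ℕ) then 1 else 0 := by
        intro t
        show (if (t : ℕ) ≤ (i : ℕ) then (1 : ℝ) else 0) *
            (if (t : ℕ) ≤ (j : ℕ) then (1 : ℝ) else 0) =
          if (t : ℕ) ≤ min (i : ℕ) (j : ℕ) then 1 else 0
        simp only [le_min_iff]
        split_ifs <;> (first | ring1 | tauto)
      rw [Finset.sum_congr rfl fun t _ => hterm t]
      rw [Finset.sum_boole]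
      have hfil : Finset.univ.filter (fun t : Fin (m + 2) => (t : ℕ) ≤ min (i : ℕ) (j : ℕ))
          = Finset.Iic (⟨min (i : ℕ) (j : ℕ), by omega⟩ : Fin (m + 2)) := by
        ext t
        simp only [Finset.mem_filter, Finset.mem_univ, true_and, Finset.mem_Iic, Fin.le_def]
      rw [hfil, Fin.card_Iic]
      simp [Nat.succ_min_succ]
    rw [hHL]
    have hdot2 : y ⬝ᵥ (L * Lᵀ) *ᵥ y = (Lᵀ *ᵥ y) ⬝ᵥ (Lᵀ *ᵥ y) := by
      rw [← Matrix.mulVec_mulVec, Matrix.dotProduct_mulVec, ← Matrix.mulVec_transpose]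
    rw [hdot2]
    -- y ≠ 0
    have hy0 : y ≠ 0 := by
      intro h0
      apply hx
      funext h
      have hlt := h.isLt
      have hval := congrFun h0 ⟨h, by omega⟩
      rw [hy] at hval
      simp only [Matrix.mulVec, dotProduct, Pi.zero_apply] at hval
      have hterm : ∀ i : Fin m, Rᵀ (⟨h, by omega⟩ : Fin (m + 2)) i * x i =
          if i = h then -(x h) else 0 := by
        intro i
        rw [Matrix.transpose_apply, hR]
        by_cases h1 : i = h
        · subst h1
          rw [if_pos rfl, if_pos rfl]; ring
        · rw [if_neg (fun hc => h1 (Fin.ext hc).symm),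
            if_neg (by intro hc; simp at hc; omega),
            if_neg (by intro hc; simp at hc; omega), if_neg h1, zero_mul]
      rw [Finset.sum_congr rfl fun i _ => hterm i] at hval
      simp [Finset.sum_ite_eq'] at hval
      show x h = 0
      simpa using hval
    -- Lᵀ *ᵥ y ≠ 0
    have hz0 : Lᵀ *ᵥ y ≠ 0 := by
      intro h0
      apply hy0
      have hz : ∀ j : Fin (m + 2),
          (∑ i : Fin (m + 2), (if (j : ℕ) ≤ (i : ℕ) then (1 : ℝ) else 0) * y i) = 0 := by
        intro j
        have hj := congrFun h0 j
        simp only [Matrix.mulVec, dotProduct, Pi.zero_apply] at hj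
        have hcongr : (∑ i : Fin (m + 2), (if (j : ℕ) ≤ (i : ℕ) then (1 : ℝ) else 0) * y i)
            = ∑ i : Fin (m + 2), Lᵀ j i * y i :=
          Finset.sum_congr rfl fun i _ => rfl
        rw [hcongr]
        exact hj
      have Hind : ∀ n : ℕ, ∀ j : Fin (m + 2), m + 2 ≤ (j : ℕ) + n → y j = 0 := by
        intro n
        induction n with
        | zero => intro j hj; exact absurd hj (by have := j.isLt; omega)
        | succ n ih =>
          intro j hj
          have h1 := hz j
          have hterm : ∀ i : Fin (m + 2), (if (j : ℕ) ≤ (i : ℕ) then (1 : ℝ) else 0) * y i =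
              if i = j then y j else 0 := by
            intro i
            by_cases hij : (j : ℕ) ≤ (i : ℕ)
            · by_cases hij2 : i = j
              · subst hij2; simp
              · have hgt : (j : ℕ) < (i : ℕ) := by
                  rcases lt_or_eq_of_le hij with h | h
                  · exact h
                  · exact absurd (Fin.ext h.symm) hij2
                have := ih i (by omega)
                simp [hij, hij2, this]
            · have hne : i ≠ j := by
                intro h; subst h; exact hij le_rfl
              simp [hij, hne]
          rw [Finset.sum_congr rfl fun i _ => hterm i] at h1
          simpa [Finset.sum_ite_eq'] using h1
      funext j
      exact Hind (m + 2) j (by omega)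
    have hpos : 0 < (Lᵀ *ᵥ y) ⬝ᵥ (Lᵀ *ᵥ y) := by
      rcases lt_or_eq_of_le (Finset.sum_nonneg fun i _ => mul_self_nonneg ((Lᵀ *ᵥ y) i)) with h | h
      · exact h
      · exact absurd (dotProduct_self_eq_zero.mp h.symm) hz0
    linarith
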